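/- Let S be a type, Q a finite type of locations with subsets Q₀ and Q_F, Δ : Q → Q → Φ a transition labeling by predicates over S, and ξ = (x_0, …, x_l) ∈ S^{l+1} a trace. Define w⁺(ξ) = sup over location sequences (q_0, …, q_{l+1}) with q_0 ∈ Q₀, q_{l+1} ∈ Q_F of Σ_{t=0}^{l} λ⁺(x_t, Δ(q_t, q_{t+1})), and wᵐ(ξ) = sup over the same sequences of min_{0 ≤ t ≤ l} λᵐ(x_t, Δ(q_t, q_{t+1})) (suprema in EReal). Then w⁺(ξ) ≤ wᵐ(ξ). -/

import Mathlib

/-- Predicates over a state space `S`: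
`φ ::= ⊤ | ⊥ | (μ ≥ 0) | φ ∧ φ | φ ∨ φ` where each atom carries `μ : S → ℝ`. -/
inductive Phi (S : Type*) where
  | top : Phi S
  | bot : Phi S
  | atom (μ : S → ℝ) : Phi S
  | and (φ₁ φ₂ : Phi S) : Phi S
  | or (φ₁ φ₂ : Phi S) : Phi S

/-- Satisfaction `s ⊨ φ` of a predicate by a state. -/
def Phi.Sat {S : Type*} (s : S) : Phi S → Prop
  | .top => True
  | .bot => False
  | .atom μ => μ s ≥ 0
  | .and φ₁ φ₂ => φ₁.Sat s ∧ φ₂.Sat s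
  | .or φ₁ φ₂ => φ₁.Sat s ∨ φ₂.Sat s

/-- The `(max,+)` generalized weight `λ⁺ : S × Φ → EReal`. -/
noncomputable def lamP {S : Type*} (s : S) : Phi S → EReal
  | .top => 0
  | .bot => ⊥
  | .atom μ => if μ s ≥ 0 then 0 else ((μ s : ℝ) : EReal)
  | .and φ₁ φ₂ => lamP s φ₁ + lamP s φ₂
  | .or φ₁ φ₂ => max (lamP s φ₁) (lamP s φ₂)

/-- The `(min,max)` generalized weight `λᵐ : S × Φ → EReal`. -/
noncomputable def lamM {S : Type*} (s : S) : Phi S → EReal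
  | .top => 0
  | .bot => ⊥
  | .atom μ => if μ s ≥ 0 then 0 else ((μ s : ℝ) : EReal)
  | .and φ₁ φ₂ => min (lamM s φ₁) (lamM s φ₂)
  | .or φ₁ φ₂ => max (lamM s φ₁) (lamM s φ₂)



lemma lamP_nonpos {S : Type*} (s : S) (φ : Phi S) : lamP s φ ≤ 0 := by
  induction φ with
  | top => simp [lamP]
  | bot => simp [lamP]
  | atom μ =>
    simp only [lamP]
    split
    · exact le_refl 0
    · rename_i h
      exact_mod_cast le_of_lt (lt_of_not_ge h)
  | and φ₁ φ₂ h₁ h₂ =>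
    calc lamP s (φ₁.and φ₂) = lamP s φ₁ + lamP s φ₂ := rfl
    _ ≤ 0 + 0 := add_le_add h₁ h₂
    _ = 0 := by simp
  | or φ₁ φ₂ h₁ h₂ => exact max_le h₁ h₂

lemma lamP_le_lamM {S : Type*} (s : S) (φ : Phi S) : lamP s φ ≤ lamM s φ := by
  induction φ with
  | top => simp [lamP, lamM]
  | bot => simp [lamP, lamM]
  | atom μ => simp [lamP, lamM]
  | and φ₁ φ₂ h₁ h₂ =>
    refine le_min ?_ ?_
    · calc lamP s φ₁ + lamP s φ₂ ≤ lamP s φ₁ + 0 := add_le_add_right (lamP_nonpos s φ₂) _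
      _ = lamP s φ₁ := by simp
      _ ≤ lamM s φ₁ := h₁
    · calc lamP s φ₁ + lamP s φ₂ ≤ 0 + lamP s φ₂ := add_le_add_left (lamP_nonpos s φ₁) _
      _ = lamP s φ₂ := by simp
      _ ≤ lamM s φ₂ := h₂
  | or φ₁ φ₂ h₁ h₂ => exact max_le_max h₁ h₂

/-- **The `(max,+)` trace weight is bounded above by the `(min,max)` trace
weight.** With `w⁺(ξ)` the supremum over accepting-shaped location sequences of
the sum of `λ⁺`-weights, and `wᵐ(ξ)` the supremum over the same sequences of
the minimum of `λᵐ`-weights (suprema in `EReal`), we have `w⁺(ξ) ≤ wᵐ(ξ)`. -/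
theorem maxplus_trace_weight_le_minmax_trace_weight
    {S Q : Type*} [Fintype Q] (Q₀ QF : Set Q) (Δ : Q → Q → Phi S)
    (l : ℕ) (x : Fin (l + 1) → S) :
    (⨆ q : {q : Fin (l + 2) → Q // q 0 ∈ Q₀ ∧ q (Fin.last (l + 1)) ∈ QF},
        ∑ t : Fin (l + 1), lamP (x t) (Δ (q.1 t.castSucc) (q.1 t.succ))) ≤
      (⨆ q : {q : Fin (l + 2) → Q // q 0 ∈ Q₀ ∧ q (Fin.last (l + 1)) ∈ QF},
        ⨅ t : Fin (l + 1), lamM (x t) (Δ (q.1 t.castSucc) (q.1 t.succ))) := by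
  refine iSup_mono fun q => le_iInf fun t => ?_
  calc (∑ u : Fin (l + 1), lamP (x u) (Δ (q.1 u.castSucc) (q.1 u.succ)))
      ≤ lamP (x t) (Δ (q.1 t.castSucc) (q.1 t.succ)) := by
        rw [← Finset.add_sum_erase Finset.univ _ (Finset.mem_univ t)]
        have h0 : (∑ u ∈ Finset.univ.erase t,
            lamP (x u) (Δ (q.1 u.castSucc) (q.1 u.succ))) ≤ 0 :=
          Finset.sum_nonpos fun i _ => lamP_nonpos (x i) _
        calc lamP (x t) (Δ (q.1 t.castSucc) (q.1 t.succ)) +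
              ∑ u ∈ Finset.univ.erase t, lamP (x u) (Δ (q.1 u.castSucc) (q.1 u.succ))
            ≤ lamP (x t) (Δ (q.1 t.castSucc) (q.1 t.succ)) + 0 := add_le_add_right h0 _
          _ = _ := by simp
    _ ≤ lamM (x t) (Δ (q.1 t.castSucc) (q.1 t.succ)) := lamP_le_lamM _ _
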